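/- There exists a constant C_E > 0 such that the following holds for every ε > 0: if μ̄ = ρ̄ω is a Gibbs critical point of E_{ε,A} (that is, ρ̄(x) = exp(W_{μ̄}(x)/ε) / ∫_S exp(W_{μ̄}(z)/ε) dω(z) for all x ∈ S) and h : S → ℝ is bounded measurable with ∫_S h dμ̄ = 0 and ‖h‖_∞ := sup_{x∈S} |h(x)| ≤ 1/2, then |E_{ε,A}((1+h)μ̄) − E_{ε,A}(μ̄) − (1/2)·(ε·∫_S h² dμ̄ − ∬_{S×S} K_A(x,y) h(x) h(y) dμ̄(x) dμ̄(y))| ≤ C_E·ε·‖h‖_∞·∫_S h² dμ̄. -/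

import Mathlib

open MeasureTheory Real Filter Topology

noncomputable section

/-- The unit sphere `S = 𝕊^{d-1}` in `ℝ^d`. -/
abbrev Sph (d : ℕ) : Type := Metric.sphere (0 : EuclideanSpace ℝ (Fin d)) 1

variable {d : ℕ}

/-- The bilinear form `⟨x, A y⟩` for the diagonal matrix `A = diag lam`. -/
def qA (lam : Fin d → ℝ) (x y : EuclideanSpace ℝ (Fin d)) : ℝ :=
  ∑ i, lam i * x i * y i

/-- The interaction kernel `K_A(x,y) = exp ⟨x, A y⟩`. -/
def Kker (lam : Fin d → ℝ) (x y : Sph d) : ℝ :=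
  Real.exp (qA lam (x : EuclideanSpace ℝ (Fin d)) (y : EuclideanSpace ℝ (Fin d)))

/-- The interaction energy `I_A(μ)`. -/
def IA (lam : Fin d → ℝ) (μ : Measure (Sph d)) : ℝ :=
  ∫ x, ∫ y, Kker lam x y ∂μ ∂μ

/-- The potential `W_μ(x) = ∫ K_A(x,y) dμ(y)`. -/
def WA (lam : Fin d → ℝ) (μ : Measure (Sph d)) (x : Sph d) : ℝ :=
  ∫ y, Kker lam x y ∂μ

open scoped Classical in
/-- Relative entropy of `μ` with respect to `ω`, with value `+∞` when `μ` is not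
absolutely continuous w.r.t. `ω` or the entropy integral diverges. -/
def Ent (ω μ : Measure (Sph d)) : EReal :=
  if μ ≪ ω ∧ Integrable (fun x => Real.log (μ.rnDeriv ω x).toReal) μ
  then ((∫ x, Real.log (μ.rnDeriv ω x).toReal ∂μ : ℝ) : EReal)
  else ⊤

/-- The free energy `E_{ε,A}(μ) = ε·Ent(μ) − (1/2)·I_A(μ)`. -/
def EA (lam : Fin d → ℝ) (ω : Measure (Sph d)) (ε : ℝ) (μ : Measure (Sph d)) : EReal :=
  (ε : EReal) * Ent ω μ - ((IA lam μ / 2 : ℝ) : EReal)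

/-- The antipodal map on the sphere. -/
def antip (x : Sph d) : Sph d :=
  ⟨-(x : EuclideanSpace ℝ (Fin d)), by
    have hx := x.2
    rw [mem_sphere_zero_iff_norm] at hx ⊢
    rwa [norm_neg]⟩

/-- The sphere self-map induced by a linear isometry equivalence of `ℝ^d`. -/
def sphMap (g : EuclideanSpace ℝ (Fin d) ≃ₗᵢ[ℝ] EuclideanSpace ℝ (Fin d)) (x : Sph d) : Sph d :=
  ⟨g (x : EuclideanSpace ℝ (Fin d)), by
    have hx := x.2
    rw [mem_sphere_zero_iff_norm] at hx ⊢
    rwa [g.norm_map]⟩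

/-- `ω` is the uniform probability measure on the sphere, characterised as a
rotation-invariant Borel probability measure. -/
def IsUniform (ω : Measure (Sph d)) : Prop :=
  IsProbabilityMeasure ω ∧
  ∀ g : EuclideanSpace ℝ (Fin d) ≃ₗᵢ[ℝ] EuclideanSpace ℝ (Fin d),
    Measure.map (sphMap g) ω = ω

/-- The (topological) support of a measure. -/
def msupport (μ : Measure (Sph d)) : Set (Sph d) :=
  {x | ∀ U : Set (Sph d), IsOpen U → x ∈ U → 0 < μ U}

/-- The set of global maximizers of the potential `W_ν`. -/
def argmaxW (lam : Fin d → ℝ) (ν : Measure (Sph d)) : Set (Sph d) :=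
  {x | ∀ y, WA lam ν y ≤ WA lam ν x}

/-- `μ` is a Gibbs critical point of `E_{ε,A}`. -/
def IsGibbs (lam : Fin d → ℝ) (ω : Measure (Sph d)) (ε : ℝ) (μ : Measure (Sph d)) : Prop :=
  IsProbabilityMeasure μ ∧
  μ = ω.withDensity (fun x => ENNReal.ofReal
    (Real.exp (WA lam μ x / ε) / ∫ z, Real.exp (WA lam μ z / ε) ∂ω))

/-- `μ` is a global minimizer of `E_{ε,A}` over Borel probability measures. -/
def IsMinimizer (lam : Fin d → ℝ) (ω : Measure (Sph d)) (ε : ℝ) (μ : Measure (Sph d)) : Prop :=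
  IsProbabilityMeasure μ ∧
  ∀ ν : Measure (Sph d), IsProbabilityMeasure ν → EA lam ω ε μ ≤ EA lam ω ε ν

/-- `m_ε`, the infimum of the free energy over probability measures. -/
def mEps (lam : Fin d → ℝ) (ω : Measure (Sph d)) (ε : ℝ) : EReal :=
  sInf {r : EReal | ∃ μ : Measure (Sph d), IsProbabilityMeasure μ ∧ EA lam ω ε μ = r}


namespace Aux18

open scoped ENNReal NNReal

lemma coord_abs_le (x : Sph d) (i : Fin d) : |(x : EuclideanSpace ℝ (Fin d)) i| ≤ 1 := by
  have hx : ‖(x : EuclideanSpace ℝ (Fin d))‖ = 1 := by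
    have := x.2; rwa [mem_sphere_zero_iff_norm] at this
  rw [EuclideanSpace.norm_eq] at hx
  have hs : ∑ j, ((x : EuclideanSpace ℝ (Fin d)) j)^2 = 1 := by
    have := congrArg (· ^ 2) hx
    simpa [Real.sq_sqrt (Finset.sum_nonneg fun j _ => sq_nonneg _), Real.norm_eq_abs,
      sq_abs] using this
  rw [← sq_le_one_iff_abs_le_one]
  calc ((x : EuclideanSpace ℝ (Fin d)) i)^2
      ≤ ∑ j, ((x : EuclideanSpace ℝ (Fin d)) j)^2 :=
        Finset.single_le_sum (f := fun j => ((x : EuclideanSpace ℝ (Fin d)) j)^2)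
          (fun j _ => sq_nonneg _) (Finset.mem_univ i)
    _ = 1 := hs

lemma qA_abs_le {lam : Fin d → ℝ} (hpos : ∀ i, 0 < lam i) (x y : Sph d) :
    |qA lam (x : EuclideanSpace ℝ (Fin d)) (y : EuclideanSpace ℝ (Fin d))| ≤ ∑ i, lam i := by
  refine (Finset.abs_sum_le_sum_abs _ _).trans (Finset.sum_le_sum fun i _ => ?_)
  have h1 := coord_abs_le x i
  have h2 := coord_abs_le y i
  have h0 := (hpos i).le
  calc |lam i * (x : EuclideanSpace ℝ (Fin d)) i * (y : EuclideanSpace ℝ (Fin d)) i|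
      = lam i * |(x : EuclideanSpace ℝ (Fin d)) i| * |(y : EuclideanSpace ℝ (Fin d)) i| := by
        rw [abs_mul, abs_mul, abs_of_nonneg h0]
    _ ≤ lam i * 1 * 1 := by
        apply mul_le_mul (mul_le_mul le_rfl h1 (abs_nonneg _) h0) h2 (abs_nonneg _)
        positivity
    _ = lam i := by ring

lemma Kker_le {lam : Fin d → ℝ} (hpos : ∀ i, 0 < lam i) (x y : Sph d) :
    Kker lam x y ≤ Real.exp (∑ i, lam i) :=
  Real.exp_le_exp.2 ((abs_le.1 (qA_abs_le hpos x y)).2)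

lemma le_Kker {lam : Fin d → ℝ} (hpos : ∀ i, 0 < lam i) (x y : Sph d) :
    Real.exp (-∑ i, lam i) ≤ Kker lam x y :=
  Real.exp_le_exp.2 ((abs_le.1 (qA_abs_le hpos x y)).1)

lemma Kker_symm (lam : Fin d → ℝ) (x y : Sph d) : Kker lam x y = Kker lam y x := by
  unfold Kker qA
  congr 1
  exact Finset.sum_congr rfl fun i _ => by ring

lemma continuous_Kker (lam : Fin d → ℝ) :
    Continuous (fun p : Sph d × Sph d => Kker lam p.1 p.2) := by
  apply Real.continuous_exp.comp
  unfold qA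
  apply continuous_finset_sum
  intro i _
  exact (continuous_const.mul ((EuclideanSpace.proj i).continuous.comp
    (continuous_subtype_val.comp continuous_fst))).mul
    ((EuclideanSpace.proj i).continuous.comp (continuous_subtype_val.comp continuous_snd))

lemma integrable_bdd {α : Type*} [MeasurableSpace α] {μ : Measure α} [IsFiniteMeasure μ]
    {f : α → ℝ} (hf : AEStronglyMeasurable f μ) {C : ℝ} (hC : ∀ x, |f x| ≤ C) :
    Integrable f μ :=
  ⟨hf, HasFiniteIntegral.of_bounded (C := C)
    (Eventually.of_forall fun x => by simpa [Real.norm_eq_abs] using hC x)⟩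

lemma taylor_bound {t : ℝ} (ht : |t| ≤ 1/2) :
    |(1 + t) * Real.log (1 + t) - t - t^2/2| ≤ 4 * |t| * t^2 := by
  have h1 : |(-t)| < 1 := by rw [abs_neg]; linarith [abs_nonneg t]
  have key := Real.abs_log_sub_add_sum_range_le h1 2
  have hsum : (∑ i ∈ Finset.range 2, (-t) ^ (i + 1) / (i + 1)) = -t + t^2/2 := by
    simp [Finset.sum_range_succ]; ring
  rw [hsum, abs_neg] at key
  have h2 : 1 - (- t) = 1 + t := by ring
  rw [h2] at key
  have hden : (1:ℝ)/2 ≤ 1 - |t| := by linarith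
  have hub : |t|^3 / (1 - |t|) ≤ 2 * |t|^3 := by
    rw [div_le_iff₀ (by linarith)]
    nlinarith [pow_nonneg (abs_nonneg t) 3]
  have key2 : |Real.log (1+t) - (t - t^2/2)| ≤ 2 * |t|^3 := by
    calc |Real.log (1+t) - (t - t^2/2)| = |(-t + t^2/2) + Real.log (1+t)| := by ring_nf
      _ ≤ |t|^3 / (1 - |t|) := key
      _ ≤ 2 * |t|^3 := hub
  set r := Real.log (1+t) - (t - t^2/2) with hr
  have hlog : Real.log (1+t) = t - t^2/2 + r := by rw [hr]; ring
  have hexpand : (1 + t) * Real.log (1 + t) - t - t^2/2 = -t^3/2 + (1+t)*r := by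
    rw [hlog]; ring
  rw [hexpand]
  have h3 : |t|^3 = |t| * t^2 := by
    rw [pow_succ, sq_abs]; ring
  have h1t : |1 + t| ≤ 3/2 := by
    rw [abs_le]; constructor <;> nlinarith [abs_le.1 ht]
  have hA : |(-t^3/2 : ℝ)| = |t|^3/2 := by
    rw [abs_div, abs_neg, abs_pow, abs_two]
  have hB : |(1+t)*r| ≤ (3/2) * (2*|t|^3) := by
    rw [abs_mul]
    exact mul_le_mul h1t key2 (abs_nonneg _) (by norm_num)
  have hu : 0 ≤ |t| * t^2 := mul_nonneg (abs_nonneg t) (sq_nonneg t)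
  calc |(-t^3/2 + (1+t)*r)| ≤ |(-t^3/2 : ℝ)| + |(1+t)*r| := abs_add_le _ _
    _ ≤ |t|^3/2 + (3/2) * (2*|t|^3) := by rw [hA]; linarith
    _ ≤ 4 * |t| * t^2 := by rw [h3]; linarith

lemma integral_withDensity_ofReal {α : Type*} [MeasurableSpace α] {μ : Measure α}
    {f : α → ℝ} (hf : Measurable f) (hf0 : ∀ x, 0 ≤ f x) (g : α → ℝ) :
    ∫ x, g x ∂(μ.withDensity fun x => ENNReal.ofReal (f x)) = ∫ x, f x * g x ∂μ := by
  have hm : Measurable (fun x => (f x).toNNReal) := hf.real_toNNReal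
  have heq : (fun x => ENNReal.ofReal (f x)) = (fun x => ((f x).toNNReal : ℝ≥0∞)) := rfl
  rw [heq, integral_withDensity_eq_integral_smul hm]
  congr 1
  ext x
  simp [NNReal.smul_def, Real.coe_toNNReal _ (hf0 x)]

lemma Ent_withDensity {ω : Measure (Sph d)} [SigmaFinite ω] {ρ : Sph d → ℝ}
    (hρm : Measurable ρ) (hρ0 : ∀ x, 0 ≤ ρ x)
    (hint : Integrable (fun x => Real.log (ρ x)) (ω.withDensity fun x => ENNReal.ofReal (ρ x))) :
    Ent ω (ω.withDensity fun x => ENNReal.ofReal (ρ x)) =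
      ((∫ x, Real.log (ρ x) ∂(ω.withDensity fun x => ENNReal.ofReal (ρ x)) : ℝ) : EReal) := by
  set μ := ω.withDensity fun x => ENNReal.ofReal (ρ x) with hμ
  have hac : μ ≪ ω := withDensity_absolutelyContinuous ω _
  have h1 : μ.rnDeriv ω =ᵐ[ω] fun x => ENNReal.ofReal (ρ x) :=
    Measure.rnDeriv_withDensity ω (hρm.ennreal_ofReal)
  have h2 : μ.rnDeriv ω =ᵐ[μ] fun x => ENNReal.ofReal (ρ x) := hac.ae_eq h1
  have hae : (fun x => Real.log (μ.rnDeriv ω x).toReal) =ᵐ[μ] fun x => Real.log (ρ x) := by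
    filter_upwards [h2] with x hx
    rw [hx, ENNReal.toReal_ofReal (hρ0 x)]
  rw [Ent, if_pos ⟨hac, (integrable_congr hae).mpr hint⟩]
  exact congrArg _ (integral_congr_ae hae)

end Aux18

set_option maxHeartbeats 2000000 in
/-- quantitative free-energy Taylor remainder bound in the density
chart at a Gibbs critical point. -/
theorem stmt18 (d : ℕ) (hd : 2 ≤ d) (lam : Fin d → ℝ)
    (hanti : Antitone lam)
    (hgap : lam ⟨1, by omega⟩ < lam ⟨0, by omega⟩)
    (hpos : ∀ i, 0 < lam i)
    (ω : Measure (Sph d)) (hω : IsUniform ω) :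
    ∃ C_E : ℝ, 0 < C_E ∧ ∀ ε : ℝ, 0 < ε →
      ∀ μbar : Measure (Sph d), ∀ ρbar : Sph d → ℝ,
        IsProbabilityMeasure μbar →
        μbar = ω.withDensity (fun x => ENNReal.ofReal (ρbar x)) →
        (∀ x, ρbar x = Real.exp (WA lam μbar x / ε) / ∫ z, Real.exp (WA lam μbar z / ε) ∂ω) →
        ∀ h : Sph d → ℝ, Measurable h →
          (∫ x, h x ∂μbar) = 0 →
          (∀ x, |h x| ≤ 1 / 2) →
          ((((1 / 2) * (ε * ∫ x, h x ^ 2 ∂μbar -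
                  ∫ x, ∫ y, Kker lam x y * h x * h y ∂μbar ∂μbar) -
                C_E * ε * (⨆ x, |h x|) * ∫ x, h x ^ 2 ∂μbar : ℝ)) : EReal) ≤
              EA lam ω ε (μbar.withDensity (fun x => ENNReal.ofReal (1 + h x))) -
                EA lam ω ε μbar ∧
            EA lam ω ε (μbar.withDensity (fun x => ENNReal.ofReal (1 + h x))) -
                EA lam ω ε μbar ≤
              ((((1 / 2) * (ε * ∫ x, h x ^ 2 ∂μbar -
                    ∫ x, ∫ y, Kker lam x y * h x * h y ∂μbar ∂μbar) +
                  C_E * ε * (⨆ x, |h x|) * ∫ x, h x ^ 2 ∂μbar : ℝ)) : EReal) := by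
  classical
  obtain ⟨hωP, -⟩ := hω
  haveI := hωP
  refine ⟨4, by norm_num, ?_⟩
  intro ε hε μbar ρbar hP hμ hρform h hhm hzero hbd
  haveI := hP
  set Λ := ∑ i, lam i with hΛdef
  set W := WA lam μbar with hWdef
  set Z := ∫ z, Real.exp (W z / ε) ∂ω with hZdef
  -- kernel facts
  have hKcont := Aux18.continuous_Kker lam
  have hKmeas : Measurable (fun p : Sph d × Sph d => Kker lam p.1 p.2) := hKcont.measurable
  have hKub : ∀ x y : Sph d, Kker lam x y ≤ Real.exp Λ := Aux18.Kker_le hpos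
  have hKlb : ∀ x y : Sph d, Real.exp (-Λ) ≤ Kker lam x y := Aux18.le_Kker hpos
  have hKpos : ∀ x y : Sph d, 0 < Kker lam x y := fun x y => Real.exp_pos _
  have hKabs : ∀ x y : Sph d, |Kker lam x y| ≤ Real.exp Λ := fun x y => by
    rw [abs_of_pos (hKpos x y)]; exact hKub x y
  -- W facts
  have hWsm : StronglyMeasurable W :=
    (hKcont.stronglyMeasurable).integral_prod_right' (ν := μbar)
  have hWm : Measurable W := hWsm.measurable
  have hKint : ∀ x : Sph d, Integrable (fun y => Kker lam x y) μbar := fun x =>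
    Aux18.integrable_bdd ((hKcont.comp (Continuous.prodMk_right x)).aestronglyMeasurable)
      (fun y => hKabs x y)
  have hWub : ∀ x, W x ≤ Real.exp Λ := fun x => by
    have h1 : ‖∫ y, Kker lam x y ∂μbar‖ ≤ Real.exp Λ * (μbar Set.univ).toReal :=
      norm_integral_le_of_norm_le_const (Eventually.of_forall fun y => by
        rw [Real.norm_eq_abs]; exact hKabs x y)
    simp only [measure_univ, ENNReal.toReal_one, mul_one, Real.norm_eq_abs] at h1
    have h2 : W x ≤ |W x| := le_abs_self _
    exact h2.trans h1
  have hWlb : ∀ x, Real.exp (-Λ) ≤ W x := fun x => by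
    have := integral_mono (integrable_const (Real.exp (-Λ))) (hKint x) (fun y => hKlb x y)
    simp [integral_const, measure_univ] at this
    exact this
  have hWabs : ∀ x, |W x| ≤ Real.exp Λ := fun x => by
    rw [abs_le]
    refine ⟨?_, hWub x⟩
    have h2 := hWlb x
    have h0 : (0:ℝ) < Real.exp (-Λ) := Real.exp_pos _
    nlinarith [Real.exp_pos Λ]
  -- Z facts
  have hWεm : Measurable fun z : Sph d => Real.exp (W z / ε) := (hWm.div_const ε).exp
  have hexpabs : ∀ z : Sph d, |Real.exp (W z / ε)| ≤ Real.exp (Real.exp Λ / ε) := fun z => by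
    rw [abs_of_pos (Real.exp_pos _)]
    apply Real.exp_le_exp.2
    exact div_le_div_of_nonneg_right (hWub z) hε.le
  have hexpint : Integrable (fun z => Real.exp (W z / ε)) ω :=
    Aux18.integrable_bdd hWεm.aestronglyMeasurable hexpabs
  have hZlb : Real.exp (Real.exp (-Λ) / ε) ≤ Z := by
    have := integral_mono (integrable_const (Real.exp (Real.exp (-Λ) / ε))) hexpint
      (fun z => Real.exp_le_exp.2 (div_le_div_of_nonneg_right (hWlb z) hε.le))
    simpa [integral_const, measure_univ] using this
  have hZpos : 0 < Z := lt_of_lt_of_le (Real.exp_pos _) hZlb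
  -- ρ facts
  have hρeq : ρbar = fun x => Real.exp (W x / ε) / Z := funext fun x => hρform x
  have hρpos : ∀ x, 0 < ρbar x := fun x => by
    rw [hρform x]; exact div_pos (Real.exp_pos _) hZpos
  have hρ0 : ∀ x, 0 ≤ ρbar x := fun x => (hρpos x).le
  have hρm : Measurable ρbar := by rw [hρeq]; exact hWεm.div_const Z
  have hlogρ : ∀ x, Real.log (ρbar x) = W x / ε - Real.log Z := fun x => by
    rw [hρform x, Real.log_div (Real.exp_pos _).ne' hZpos.ne', Real.log_exp]
  have hlogρm : Measurable fun x => Real.log (ρbar x) := Real.measurable_log.comp hρm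
  have hlogρabs : ∀ x, |Real.log (ρbar x)| ≤ Real.exp Λ / ε + |Real.log Z| := fun x => by
    rw [hlogρ x, abs_le]
    have h1 : |W x / ε| ≤ Real.exp Λ / ε := by
      rw [abs_div, abs_of_pos hε]
      exact div_le_div_of_nonneg_right (hWabs x) hε.le
    have h2 := abs_le.1 h1
    have h3 := le_abs_self (Real.log Z)
    have h4 := neg_abs_le (Real.log Z)
    constructor <;> linarith
  -- h facts
  have h1pos : ∀ x, (0:ℝ) < 1 + h x := fun x => by have := abs_le.1 (hbd x); linarith
  have h1lb : ∀ x, (1:ℝ)/2 ≤ 1 + h x := fun x => by have := abs_le.1 (hbd x); linarith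
  have h1ub : ∀ x, 1 + h x ≤ 3/2 := fun x => by have := abs_le.1 (hbd x); linarith
  have h1pm : Measurable fun x => 1 + h x := measurable_const.add hhm
  have hlog1pabs : ∀ x, |Real.log (1 + h x)| ≤ 1 := fun x => by
    rw [abs_le]
    constructor
    · have h2 : Real.log ((1:ℝ)/2) ≤ Real.log (1 + h x) :=
        Real.log_le_log (by norm_num) (h1lb x)
      have h3 : Real.log ((1:ℝ)/2) = -Real.log 2 := by
        rw [one_div, Real.log_inv]
      have h4 : Real.log 2 ≤ 1 := by
        have := Real.log_le_sub_one_of_pos (by norm_num : (0:ℝ) < 2)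
        linarith
      linarith
    · have h2 : Real.log (1 + h x) ≤ 1 + h x - 1 :=
        Real.log_le_sub_one_of_pos (h1pos x)
      have := abs_le.1 (hbd x)
      linarith
  -- sup facts
  set s := ⨆ x, |h x| with hsdef
  have hbdd : BddAbove (Set.range fun x : Sph d => |h x|) :=
    ⟨1/2, by rintro _ ⟨x, rfl⟩; exact hbd x⟩
  have hsle : ∀ x, |h x| ≤ s := fun x => le_ciSup hbdd x
  have hs0 : 0 ≤ s := Real.iSup_nonneg fun x => abs_nonneg _
  -- ν
  set ν := μbar.withDensity fun x => ENNReal.ofReal (1 + h x) with hνdef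
  have hIν : ∀ g : Sph d → ℝ, ∫ x, g x ∂ν = ∫ x, (1 + h x) * g x ∂μbar := fun g =>
    Aux18.integral_withDensity_ofReal h1pm (fun x => (h1pos x).le) g
  have hνω : ν = ω.withDensity fun x => ENNReal.ofReal (ρbar x * (1 + h x)) := by
    rw [hνdef, hμ, ← withDensity_mul ω hρm.ennreal_ofReal h1pm.ennreal_ofReal]
    congr 1
    funext x
    simp only [Pi.mul_apply]
    exact (ENNReal.ofReal_mul (hρ0 x)).symm
  haveI hνfin : IsFiniteMeasure ν := by
    constructor
    rw [hνdef, withDensity_apply _ MeasurableSet.univ]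
    calc ∫⁻ x in Set.univ, ENNReal.ofReal (1 + h x) ∂μbar
        ≤ ∫⁻ _x in Set.univ, (2:ENNReal) ∂μbar := by
          apply lintegral_mono
          intro x
          calc ENNReal.ofReal (1 + h x) ≤ ENNReal.ofReal 2 :=
            ENNReal.ofReal_le_ofReal (by have := h1ub x; linarith)
          _ = 2 := by norm_num
      _ < ⊤ := by
          rw [setLIntegral_const]
          exact ENNReal.mul_lt_top (by norm_num) (measure_lt_top _ _)
  -- integrable library (w.r.t. μbar)
  have ih : Integrable h μbar := Aux18.integrable_bdd hhm.aestronglyMeasurable hbd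
  have ih2 : Integrable (fun x => h x ^ 2) μbar :=
    Aux18.integrable_bdd (hhm.pow_const 2).aestronglyMeasurable
      (C := 1/4) (fun x => by
        rw [abs_pow, sq_abs, ← sq_abs]
        nlinarith [hbd x, abs_nonneg (h x)])
  have iW : Integrable W μbar := Aux18.integrable_bdd hWsm.aestronglyMeasurable hWabs
  have ihW : Integrable (fun x => h x * W x) μbar :=
    Aux18.integrable_bdd (hhm.mul hWm).aestronglyMeasurable (C := Real.exp Λ)
      (fun x => by
        rw [abs_mul]
        calc |h x| * |W x| ≤ 1 * Real.exp Λ := by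
              apply mul_le_mul ((hbd x).trans (by norm_num)) (hWabs x) (abs_nonneg _)
              norm_num
          _ = Real.exp Λ := one_mul _)
  have ilogρ : Integrable (fun x => Real.log (ρbar x)) μbar :=
    Aux18.integrable_bdd hlogρm.aestronglyMeasurable hlogρabs
  have ihlogρ : Integrable (fun x => h x * Real.log (ρbar x)) μbar :=
    Aux18.integrable_bdd (hhm.mul hlogρm).aestronglyMeasurable
      (C := Real.exp Λ / ε + |Real.log Z|) (fun x => by
        rw [abs_mul]
        calc |h x| * |Real.log (ρbar x)| ≤ 1 * (Real.exp Λ / ε + |Real.log Z|) := by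
              apply mul_le_mul ((hbd x).trans (by norm_num)) (hlogρabs x) (abs_nonneg _)
              norm_num
          _ = _ := one_mul _)
  have hlog1pm : Measurable fun x => Real.log (1 + h x) := Real.measurable_log.comp h1pm
  have ilog1p : Integrable (fun x => Real.log (1 + h x)) μbar :=
    Aux18.integrable_bdd hlog1pm.aestronglyMeasurable hlog1pabs
  have iT : Integrable (fun x => (1 + h x) * Real.log (1 + h x)) μbar :=
    Aux18.integrable_bdd (h1pm.mul hlog1pm).aestronglyMeasurable (C := 3/2)
      (fun x => by
        rw [abs_mul]
        calc |1 + h x| * |Real.log (1 + h x)| ≤ (3/2) * 1 := by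
              apply mul_le_mul _ (hlog1pabs x) (abs_nonneg _) (by norm_num)
              rw [abs_of_pos (h1pos x)]; exact h1ub x
          _ = 3/2 := by norm_num)
  -- V
  set V := fun x => ∫ y, Kker lam x y * h y ∂μbar with hVdef
  have hKh_sm : StronglyMeasurable (fun p : Sph d × Sph d => Kker lam p.1 p.2 * h p.2) :=
    (hKmeas.mul (hhm.comp measurable_snd)).stronglyMeasurable
  have hKh_abs : ∀ p : Sph d × Sph d, |Kker lam p.1 p.2 * h p.2| ≤ Real.exp Λ := fun p => by
    rw [abs_mul]
    calc |Kker lam p.1 p.2| * |h p.2| ≤ Real.exp Λ * 1 := by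
          apply mul_le_mul (hKabs _ _) ((hbd _).trans (by norm_num)) (abs_nonneg _)
            (Real.exp_pos _).le
      _ = Real.exp Λ := mul_one _
  have hVsm : StronglyMeasurable V := hKh_sm.integral_prod_right' (ν := μbar)
  have hVm : Measurable V := hVsm.measurable
  have hVabs : ∀ x, |V x| ≤ Real.exp Λ := fun x => by
    have h1 : ‖∫ y, Kker lam x y * h y ∂μbar‖ ≤ Real.exp Λ * (μbar Set.univ).toReal :=
      norm_integral_le_of_norm_le_const (Eventually.of_forall fun y => by
        rw [Real.norm_eq_abs]; exact hKh_abs (x, y))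
    simpa [measure_univ, Real.norm_eq_abs] using h1
  have iKh : ∀ x : Sph d, Integrable (fun y => Kker lam x y * h y) μbar := fun x =>
    Aux18.integrable_bdd
      (((hKcont.comp (Continuous.prodMk_right x)).measurable.mul hhm).aestronglyMeasurable)
      (fun y => hKh_abs (x, y))
  have iV : Integrable V μbar := Aux18.integrable_bdd hVsm.aestronglyMeasurable hVabs
  have ihV : Integrable (fun x => h x * V x) μbar :=
    Aux18.integrable_bdd (hhm.mul hVm).aestronglyMeasurable (C := Real.exp Λ)
      (fun x => by
        rw [abs_mul]
        calc |h x| * |V x| ≤ 1 * Real.exp Λ := by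
              apply mul_le_mul ((hbd x).trans (by norm_num)) (hVabs x) (abs_nonneg _)
              norm_num
          _ = _ := one_mul _)
  -- Fubini: ∫ V = ∫ h W
  have hprodint : Integrable (fun p : Sph d × Sph d => Kker lam p.1 p.2 * h p.2)
      (μbar.prod μbar) :=
    Aux18.integrable_bdd hKh_sm.aestronglyMeasurable hKh_abs
  have hswap : ∫ x, ∫ y, Kker lam x y * h y ∂μbar ∂μbar
      = ∫ y, ∫ x, Kker lam x y * h y ∂μbar ∂μbar :=
    integral_integral_swap (f := fun x y => Kker lam x y * h y) hprodint
  have hVW : ∫ x, V x ∂μbar = ∫ x, h x * W x ∂μbar := by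
    rw [hVdef]
    simp only
    rw [hswap]
    refine integral_congr_ae (Eventually.of_forall fun y => ?_)
    dsimp only
    rw [integral_mul_const]
    have hWy : (∫ x, Kker lam x y ∂μbar) = W y := by
      rw [hWdef]
      unfold WA
      exact integral_congr_ae (Eventually.of_forall fun x => Aux18.Kker_symm lam x y)
    rw [hWy, mul_comm]
  -- the statement's double integral equals ∫ h V
  have hQ : (∫ x, ∫ y, Kker lam x y * h x * h y ∂μbar ∂μbar) = ∫ x, h x * V x ∂μbar := by
    refine integral_congr_ae (Eventually.of_forall fun x => ?_)
    dsimp only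
    rw [hVdef]
    dsimp only
    rw [← integral_const_mul]
    refine integral_congr_ae (Eventually.of_forall fun y => ?_)
    dsimp only
    ring
  -- IA of ν
  have hinner : ∀ x, (∫ y, Kker lam x y ∂ν) = W x + V x := fun x => by
    rw [hIν (fun y => Kker lam x y)]
    have heq : (fun y => (1 + h y) * Kker lam x y)
        = fun y => Kker lam x y + Kker lam x y * h y := funext fun y => by ring
    rw [heq, integral_add (hKint x) (iKh x)]
    rfl
  have hIAν : IA lam ν = IA lam μbar + 2 * (∫ x, h x * W x ∂μbar) + ∫ x, h x * V x ∂μbar := by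
    have hIAμ : IA lam μbar = ∫ x, W x ∂μbar := rfl
    unfold IA
    rw [hIν (fun x => ∫ y, Kker lam x y ∂ν)]
    calc ∫ x, (1 + h x) * ∫ y, Kker lam x y ∂ν ∂μbar
        = ∫ x, (W x + V x + (h x * W x + h x * V x)) ∂μbar := by
          refine integral_congr_ae (Eventually.of_forall fun x => ?_)
          dsimp only
          rw [hinner x]; ring
      _ = ∫ x, W x ∂μbar + ∫ x, V x ∂μbar
            + ((∫ x, h x * W x ∂μbar) + ∫ x, h x * V x ∂μbar) := by
          have iWV : Integrable (fun x => W x + V x) μbar := iW.add iV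
          have ihWV : Integrable (fun x => h x * W x + h x * V x) μbar := ihW.add ihV
          rw [integral_add iWV ihWV, integral_add iW iV, integral_add ihW ihV]
      _ = _ := by
          rw [hVW]
          have hIAμ2 : (∫ x, ∫ y, Kker lam x y ∂μbar ∂μbar) = IA lam μbar := rfl
          rw [hIAμ2, hIAμ]
          ring
  -- entropy values
  have hEntμ : Ent ω μbar = ((∫ x, Real.log (ρbar x) ∂μbar : ℝ) : EReal) := by
    have h1 := Aux18.Ent_withDensity (ω := ω) hρm hρ0 (by rw [← hμ]; exact ilogρ)
    rw [hμ, h1, ← hμ]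
  have hlogν : ∀ x, Real.log (ρbar x * (1 + h x))
      = Real.log (ρbar x) + Real.log (1 + h x) := fun x =>
    Real.log_mul (hρpos x).ne' (h1pos x).ne'
  have hρhm : Measurable fun x => ρbar x * (1 + h x) := hρm.mul h1pm
  have hEntν_int : Integrable (fun x => Real.log (ρbar x * (1 + h x))) ν :=
    Aux18.integrable_bdd ((Real.measurable_log.comp hρhm).aestronglyMeasurable)
      (C := Real.exp Λ / ε + |Real.log Z| + 1) (fun x => by
        rw [hlogν x]
        calc |Real.log (ρbar x) + Real.log (1 + h x)|
            ≤ |Real.log (ρbar x)| + |Real.log (1 + h x)| := abs_add_le _ _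
          _ ≤ _ := add_le_add (hlogρabs x) (hlog1pabs x))
  have hEntν : Ent ω ν = ((∫ x, Real.log (ρbar x * (1 + h x)) ∂ν : ℝ) : EReal) := by
    have h1 := Aux18.Ent_withDensity (ω := ω) hρhm
      (fun x => mul_nonneg (hρ0 x) (h1pos x).le) (by rw [← hνω]; exact hEntν_int)
    rw [hνω, h1, ← hνω]
  -- compute entropy integral of ν
  have hEnthlogρ : ∫ x, h x * Real.log (ρbar x) ∂μbar = (∫ x, h x * W x ∂μbar) / ε := by
    have heq : (fun x => h x * Real.log (ρbar x))
        = fun x => (h x * W x) / ε - Real.log Z * h x := funext fun x => by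
      rw [hlogρ x]; field_simp
    have i1 : Integrable (fun x => (h x * W x) / ε) μbar := ihW.div_const ε
    have i2 : Integrable (fun x => Real.log Z * h x) μbar := ih.const_mul _
    rw [heq, integral_sub i1 i2, integral_div, integral_const_mul, hzero, mul_zero, sub_zero]
  have hEν_val : ∫ x, Real.log (ρbar x * (1 + h x)) ∂ν
      = (∫ x, Real.log (ρbar x) ∂μbar) + (∫ x, h x * W x ∂μbar) / ε
        + ∫ x, (1 + h x) * Real.log (1 + h x) ∂μbar := by
    rw [hIν (fun x => Real.log (ρbar x * (1 + h x)))]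
    calc ∫ x, (1 + h x) * Real.log (ρbar x * (1 + h x)) ∂μbar
        = ∫ x, (Real.log (ρbar x) + h x * Real.log (ρbar x)
            + (1 + h x) * Real.log (1 + h x)) ∂μbar := by
          refine integral_congr_ae (Eventually.of_forall fun x => ?_)
          dsimp only
          rw [hlogν x]; ring
      _ = (∫ x, Real.log (ρbar x) ∂μbar) + (∫ x, h x * Real.log (ρbar x) ∂μbar)
            + ∫ x, (1 + h x) * Real.log (1 + h x) ∂μbar := by
          have i1 : Integrable (fun x => Real.log (ρbar x) + h x * Real.log (ρbar x)) μbar :=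
            ilogρ.add ihlogρ
          rw [integral_add i1 iT, integral_add ilogρ ihlogρ]
      _ = _ := by rw [hEnthlogρ]
  -- EA values
  have hEAμ : EA lam ω ε μbar
      = ((ε * (∫ x, Real.log (ρbar x) ∂μbar) - IA lam μbar / 2 : ℝ) : EReal) := by
    rw [EA, hEntμ, ← EReal.coe_mul, ← EReal.coe_sub]
  have hEAν : EA lam ω ε ν
      = ((ε * (∫ x, Real.log (ρbar x * (1 + h x)) ∂ν) - IA lam ν / 2 : ℝ) : EReal) := by
    rw [EA, hEntν, ← EReal.coe_mul, ← EReal.coe_sub]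
  -- real difference
  set HW := ∫ x, h x * W x ∂μbar with hHWdef
  set Qd := ∫ x, h x * V x ∂μbar with hQddef
  set T := ∫ x, (1 + h x) * Real.log (1 + h x) ∂μbar with hTdef
  set H2 := ∫ x, h x ^ 2 ∂μbar with hH2def
  have hdiffval : (ε * (∫ x, Real.log (ρbar x * (1 + h x)) ∂ν) - IA lam ν / 2)
      - (ε * (∫ x, Real.log (ρbar x) ∂μbar) - IA lam μbar / 2)
      = ε * T - Qd / 2 := by
    rw [hEν_val, hIAν]
    field_simp
    ring
  -- remainder
  have hgint : Integrable
      (fun x => (1 + h x) * Real.log (1 + h x) - h x - h x ^ 2 / 2) μbar :=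
    (iT.sub ih).sub (ih2.div_const 2)
  have hgbound : ∀ x, |(1 + h x) * Real.log (1 + h x) - h x - h x ^ 2 / 2|
      ≤ 4 * s * h x ^ 2 := fun x => by
    have h1 := Aux18.taylor_bound (hbd x)
    have h2 : 4 * |h x| * h x ^ 2 ≤ 4 * s * h x ^ 2 := by
      have := hsle x
      nlinarith [sq_nonneg (h x)]
    linarith
  have hRint : T - H2 / 2
      = ∫ x, ((1 + h x) * Real.log (1 + h x) - h x - h x ^ 2 / 2) ∂μbar := by
    have i1 : Integrable (fun x => (1 + h x) * Real.log (1 + h x) - h x) μbar := iT.sub ih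
    have i2 : Integrable (fun x => h x ^ 2 / 2) μbar := ih2.div_const 2
    rw [integral_sub i1 i2, integral_sub iT ih, hzero, integral_div]
    rw [hTdef, hH2def]
    ring
  have hRabs : |T - H2 / 2| ≤ 4 * s * H2 := by
    rw [hRint]
    calc |∫ x, ((1 + h x) * Real.log (1 + h x) - h x - h x ^ 2 / 2) ∂μbar|
        ≤ ∫ x, |(1 + h x) * Real.log (1 + h x) - h x - h x ^ 2 / 2| ∂μbar :=
          abs_integral_le_integral_abs
      _ ≤ ∫ x, 4 * s * h x ^ 2 ∂μbar :=
          integral_mono hgint.abs (ih2.const_mul _) hgbound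
      _ = 4 * s * H2 := by rw [integral_const_mul, hH2def]
  -- finish
  rw [hEAμ, hEAν, ← EReal.coe_sub, hdiffval, hQ]
  constructor
  · apply EReal.coe_le_coe_iff.2
    have hr := abs_le.1 hRabs
    nlinarith [hr.1, hε.le]
  · apply EReal.coe_le_coe_iff.2
    have hr := abs_le.1 hRabs
    nlinarith [hr.2, hε.le]


end
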